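/- Let n ≥ 2 and let u_{ij} > 0 be integers, and let M be the n×n integer matrix whose rows are the exponent vectors of the Northcott-type binomials (last row equal to the sum of the first n−1 rows, as in the Northcott construction). If α_1,…,α_{n-1} are integers such that the vector (α_1,…,α_{n-1},0)·M has all coordinates nonnegative, then α_1 = α_2 = ⋯ = α_{n-1} = 0. Equivalently, the only element of the row lattice of M lying in ℕ^n is the zero vector, so the associated monoid ℕ𝒜 is unit free. -/
import Mathlib


/-- if `(α_1,…,α_{n-1},0)·M` has all coordinates nonnegative, where `M` is the
exponent matrix of a Northcott-type ideal with positive exponents `u_{ij}` (1-based indices),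
then all the `α_i` vanish; hence the associated monoid is unit free. -/
theorem northcott_unit_free (n : ℕ) (hn : 2 ≤ n) (u : ℕ → ℕ → ℤ)
    (hu : ∀ i j, 1 ≤ i → i ≤ n → 1 ≤ j → j ≤ n → 0 < u i j)
    (α : ℕ → ℤ)
    (h1 : ∀ i, 1 ≤ i → i ≤ n - 2 → 0 ≤ α i * u n i + (α i - α (i + 1)) * u (i + 1) i)
    (h2 : 0 ≤ α (n - 1) * u n (n - 1) + (α (n - 1) - α 1) * u 1 (n - 1))
    (h3 : 0 ≤ ∑ i ∈ Finset.Icc 1 (n - 1), (-(α i)) * u i n) :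
    ∀ i, 1 ≤ i → i ≤ n - 1 → α i = 0 := by
  -- one-step strict decrease when negative
  have step : ∀ i, 1 ≤ i → i ≤ n - 2 → α i < 0 → α (i + 1) < α i := by
    intro i hi1 hi2 hneg
    have hin : i ≤ n := le_trans hi2 (Nat.sub_le n 2)
    have hi1n : i + 1 ≤ n := by omega
    have hu1 : 0 < u n i := hu n i (by omega) le_rfl hi1 hin
    have hu2 : 0 < u (i + 1) i := hu (i + 1) i (by omega) hi1n hi1 hin
    have h := h1 i hi1 hi2
    nlinarith [mul_pos hu1 (neg_pos.mpr hneg)]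
  -- propagate: if α j < 0 with 1 ≤ j ≤ n-1 then α k ≤ α j for all j ≤ k ≤ n-1
  have chain : ∀ j, 1 ≤ j → α j < 0 → ∀ k, j ≤ k → k ≤ n - 1 → α k ≤ α j := by
    intro j hj1 hneg k hk1 hk2
    induction k with
    | zero => omega
    | succ m ih =>
      rcases Nat.lt_or_ge j (m + 1) with h | h
      · have hm1 : j ≤ m := by omega
        have hm2 : m ≤ n - 1 := by omega
        have him : α m ≤ α j := ih hm1 hm2
        have hmneg : α m < 0 := lt_of_le_of_lt him hneg
        have := step m (by omega) (by omega) hmneg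
        linarith
      · have : j = m + 1 := by omega
        simp [this]
  -- all α are nonnegative
  have nonneg : ∀ j, 1 ≤ j → j ≤ n - 1 → 0 ≤ α j := by
    intro j hj1 hj2
    by_contra hneg
    push_neg at hneg
    have hlast : α (n - 1) ≤ α j := chain j hj1 hneg (n - 1) hj2 le_rfl
    have hlastneg : α (n - 1) < 0 := lt_of_le_of_lt hlast hneg
    have hu1 : 0 < u n (n - 1) := hu n (n - 1) (by omega) le_rfl (by omega) (by omega)
    have hu2 : 0 < u 1 (n - 1) := hu 1 (n - 1) le_rfl (by omega) (by omega) (by omega)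
    have h1neg : α 1 < α (n - 1) := by
      nlinarith [mul_pos hu1 (neg_pos.mpr hlastneg)]
    have h1neg' : α 1 < 0 := lt_trans h1neg hlastneg
    have : α j ≤ α 1 := chain 1 le_rfl h1neg' j hj1 hj2
    linarith
  -- each summand is nonpositive; the sum is nonneg, so each is zero
  have hterms : ∀ i ∈ Finset.Icc 1 (n - 1), (-(α i)) * u i n ≤ 0 := by
    intro i hi
    simp only [Finset.mem_Icc] at hi
    have hα := nonneg i hi.1 hi.2
    have hui : 0 < u i n := hu i n hi.1 (by omega) (by omega) le_rfl
    nlinarith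
  have hsum0 : ∀ i ∈ Finset.Icc 1 (n - 1), (-(α i)) * u i n = 0 := by
    have hle : ∑ i ∈ Finset.Icc 1 (n - 1), (-(α i)) * u i n ≤ 0 :=
      Finset.sum_nonpos hterms
    have heq : ∑ i ∈ Finset.Icc 1 (n - 1), (-(α i)) * u i n = 0 := le_antisymm hle h3
    intro i hi
    have := (Finset.sum_eq_zero_iff_of_nonpos hterms).mp heq i hi
    exact this
  intro i hi1 hi2
  have h := hsum0 i (Finset.mem_Icc.mpr ⟨hi1, hi2⟩)
  have hui : 0 < u i n := hu i n hi1 (by omega) (by omega) le_rfl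
  have : -(α i) = 0 ∨ u i n = 0 := mul_eq_zero.mp h
  rcases this with h' | h'
  · linarith
  · omega
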